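/- arXiv:1110.1351 — 3 statements merged into one kernel-verified Lean document; each statement's English description precedes it below -/
import Mathlib

section
/- Let G be any two-by-two game with Player One payoffs X₁, X₂, X₃, X₄. Then in every mixed-strategy Nash equilibrium (ν,μ) of G^Q, Player One's expected payoff satisfies P₁^Q(ν,μ) ≥ (X₁ + X₂ + X₃ + X₄)/4. -/
noncomputable section

open MeasureTheory

local notation "ℍ" => Quaternion ℝ

instance : MeasurableSpace (Quaternion ℝ) := borel _
instance : BorelSpace (Quaternion ℝ) := ⟨rfl⟩

/-- The four real coordinates of a quaternion: `p = π₁(p) + π₂(p)i + π₃(p)j + π₄(p)k`. -/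
def piQ (t : Fin 4) (p : ℍ) : ℝ := ![p.re, p.imI, p.imJ, p.imK] t

/-- The standard inner product on ℍ ≅ ℝ⁴. -/
def qinner (p q : ℍ) : ℝ := ∑ t : Fin 4, piQ t p * piQ t q

/-- The quaternions `i`, `j`, `k`. -/
def qI : ℍ := ⟨0, 1, 0, 0⟩
def qJ : ℍ := ⟨0, 0, 1, 0⟩
def qK : ℍ := ⟨0, 0, 0, 1⟩

/-- A mixed quantum strategy: a Borel probability measure on the unit quaternions. -/
def IsMixed (μ : Measure ℍ) : Prop :=
  IsProbabilityMeasure μ ∧ μ {p : ℍ | ‖p‖ = 1} = 1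

/-- Quantum payoff with payoff vector `X`: `P^Q(p,q) = Σ_t π_t(pq)² X_t`. -/
def payoff (X : Fin 4 → ℝ) (p q : ℍ) : ℝ :=
  ∑ t : Fin 4, (piQ t (p * q)) ^ 2 * X t

/-- Expected payoff of a pair of mixed strategies. -/
def payoffM (X : Fin 4 → ℝ) (ν μ : Measure ℍ) : ℝ :=
  ∫ p, ∫ q, payoff X p q ∂μ ∂ν

/-- Mixed-strategy Nash equilibrium of the quantum game with payoff vectors `X`, `Y`. -/
def IsNash (X Y : Fin 4 → ℝ) (ν μ : Measure ℍ) : Prop :=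
  IsMixed ν ∧ IsMixed μ ∧
    (∀ ν' : Measure ℍ, IsMixed ν' → payoffM X ν' μ ≤ payoffM X ν μ) ∧
    (∀ μ' : Measure ℍ, IsMixed μ' → payoffM Y ν μ' ≤ payoffM Y ν μ)

/-- Equivalence of mixed quantum strategies. -/
def StratEquiv (μ μ' : Measure ℍ) : Prop :=
  ∀ p : ℍ, ‖p‖ = 1 → ∀ t : Fin 4,
    ∫ q, (piQ t (p * q)) ^ 2 ∂μ = ∫ q, (piQ t (p * q)) ^ 2 ∂μ'

/-- Equivalence of pairs of mixed strategies: `(ν,μ) ∼ (ν',μ')` iff there is a unit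
quaternion `u` with `ν' ∼ ν·u` and `μ' ∼ u⁻¹·μ`. -/
def PairEquiv (ν μ ν' μ' : Measure ℍ) : Prop :=
  ∃ u : ℍ, ‖u‖ = 1 ∧
    StratEquiv (Measure.map (fun p => p * u) ν) ν' ∧
    StratEquiv (Measure.map (fun q => u⁻¹ * q) μ) μ'

/-- A generic two-by-two game: all payoffs distinct and all pairwise sums distinct. -/
def Generic (X Y : Fin 4 → ℝ) : Prop :=
  Function.Injective X ∧ Function.Injective Y ∧
    (∀ s t s' t' : Fin 4, s < t → s' < t' → X s + X t = X s' + X t' → s = s' ∧ t = t') ∧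
    (∀ s t s' t' : Fin 4, s < t → s' < t' → Y s + Y t = Y s' + Y t' → s = s' ∧ t = t')

/-- `K(p) = π₁(p)π₂(p)π₃(p)π₄(p)`. -/
def K (p : ℍ) : ℝ := p.re * p.imI * p.imJ * p.imK

/-- Intertwined quadruple of quaternions. -/
def Intertwined (p q r s : ℍ) : Prop :=
  ∃ α : ℝ, α ≠ 0 ∧ ∀ X Y : ℝ, α * K (X • p + Y • q) = K (X • r + Y • s)

/-- Fully intertwined quadruple of quaternions. -/
def FullyIntertwined (p q r s : ℍ) : Prop :=
  Intertwined p q r s ∧ Intertwined p r q s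

/-- `p` is an optimal response for Player One to the mixed strategy `μ`. -/
def Optimal₁ (X : Fin 4 → ℝ) (μ : Measure ℍ) (p : ℍ) : Prop :=
  ‖p‖ = 1 ∧ ∀ p' : ℍ, ‖p'‖ = 1 → ∫ q, payoff X p' q ∂μ ≤ ∫ q, payoff X p q ∂μ


section NashAux

/-- Any function is integrable with respect to a Dirac measure. -/
lemma integrable_dirac' (f : ℍ → ℝ) (a : ℍ) :
    Integrable f (Measure.dirac a) :=
  (integrable_const (f a)).congr (MeasureTheory.ae_eq_dirac f).symm

lemma payoff_continuous (X : Fin 4 → ℝ) (p : ℍ) :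
    Continuous fun q : ℍ => payoff X p q := by
  unfold payoff piQ
  refine continuous_finset_sum _ fun t _ => Continuous.mul (Continuous.pow ?_ 2) continuous_const
  have hmul : Continuous fun q : ℍ => p * q := continuous_const.mul continuous_id
  fin_cases t
  · exact Quaternion.continuous_re.comp hmul
  · exact Quaternion.continuous_imI.comp hmul
  · exact Quaternion.continuous_imJ.comp hmul
  · exact Quaternion.continuous_imK.comp hmul

lemma piQ_sq_le (t : Fin 4) (r : ℍ) : (piQ t r) ^ 2 ≤ ‖r‖ ^ 2 := by
  have h : ‖r‖ ^ 2 = r.re ^ 2 + r.imI ^ 2 + r.imJ ^ 2 + r.imK ^ 2 := by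
    rw [sq, ← Quaternion.normSq_eq_norm_mul_self, Quaternion.normSq_def']
  fin_cases t
  · show r.re ^ 2 ≤ _; nlinarith [sq_nonneg r.imI, sq_nonneg r.imJ, sq_nonneg r.imK]
  · show r.imI ^ 2 ≤ _; nlinarith [sq_nonneg r.re, sq_nonneg r.imJ, sq_nonneg r.imK]
  · show r.imJ ^ 2 ≤ _; nlinarith [sq_nonneg r.re, sq_nonneg r.imI, sq_nonneg r.imK]
  · show r.imK ^ 2 ≤ _; nlinarith [sq_nonneg r.re, sq_nonneg r.imI, sq_nonneg r.imJ]

lemma ae_unit (μ : Measure ℍ) (hμ : IsMixed μ) : ∀ᵐ q ∂μ, ‖q‖ = 1 := by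
  have hp : IsProbabilityMeasure μ := hμ.1
  have hmeas : MeasurableSet {q : ℍ | ‖q‖ = 1} :=
    (isClosed_eq continuous_norm continuous_const).measurableSet
  rw [ae_iff]
  have : {a : ℍ | ¬ ‖a‖ = 1} = {q : ℍ | ‖q‖ = 1}ᶜ := rfl
  rw [this, measure_compl hmeas (measure_ne_top μ _), hμ.2, measure_univ, tsub_self]

lemma integrable_payoff (X : Fin 4 → ℝ) (p : ℍ) (hp : ‖p‖ = 1) (μ : Measure ℍ)
    (hμ : IsMixed μ) : Integrable (fun q => payoff X p q) μ := by
  have hpm : IsProbabilityMeasure μ := hμ.1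
  refine (integrable_const (∑ t : Fin 4, |X t|)).mono'
    (payoff_continuous X p).aestronglyMeasurable ?_
  filter_upwards [ae_unit μ hμ] with q hq
  have hn : ‖p * q‖ = 1 := by rw [norm_mul, hp, hq, mul_one]
  calc ‖payoff X p q‖ ≤ ∑ t : Fin 4, ‖(piQ t (p * q)) ^ 2 * X t‖ := norm_sum_le _ _
    _ ≤ ∑ t : Fin 4, |X t| := by
        refine Finset.sum_le_sum fun t _ => ?_
        rw [Real.norm_eq_abs, abs_mul, abs_of_nonneg (sq_nonneg _)]
        have h1 : (piQ t (p * q)) ^ 2 ≤ 1 := by simpa [hn] using piQ_sq_le t (p * q)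
        nlinarith [abs_nonneg (X t), sq_nonneg (piQ t (p * q))]

lemma key_sum (X : Fin 4 → ℝ) (q : ℍ) :
    payoff X 1 q + payoff X qI q + payoff X qJ q + payoff X qK q
      = (∑ t : Fin 4, X t) * (q.re ^ 2 + q.imI ^ 2 + q.imJ ^ 2 + q.imK ^ 2) := by
  simp only [payoff, piQ, Fin.sum_univ_four, Matrix.cons_val_zero, Matrix.cons_val_one,
    Matrix.head_cons, Matrix.cons_val_two, Matrix.tail_cons, Matrix.cons_val_three,
    Quaternion.re_mul, Quaternion.imI_mul, Quaternion.imJ_mul, Quaternion.imK_mul,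
    Quaternion.re_one, Quaternion.imI_one, Quaternion.imJ_one, Quaternion.imK_one,
    QuaternionAlgebra.re_mul, QuaternionAlgebra.imI_mul, QuaternionAlgebra.imJ_mul,
    QuaternionAlgebra.imK_mul]
  simp only [qI, qJ, qK]
  ring

lemma norm_qI : ‖qI‖ = 1 := by
  have h : Quaternion.normSq qI = 1 := by rw [Quaternion.normSq_def']; simp [qI]
  rw [Quaternion.normSq_eq_norm_mul_self] at h
  nlinarith [norm_nonneg qI]

lemma norm_qJ : ‖qJ‖ = 1 := by
  have h : Quaternion.normSq qJ = 1 := by rw [Quaternion.normSq_def']; simp [qJ]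
  rw [Quaternion.normSq_eq_norm_mul_self] at h
  nlinarith [norm_nonneg qJ]

lemma norm_qK : ‖qK‖ = 1 := by
  have h : Quaternion.normSq qK = 1 := by rw [Quaternion.normSq_def']; simp [qK]
  rw [Quaternion.normSq_eq_norm_mul_self] at h
  nlinarith [norm_nonneg qK]

lemma four_integral (X : Fin 4 → ℝ) (μ : Measure ℍ) (hμ : IsMixed μ) :
    (∫ q, payoff X 1 q ∂μ) + (∫ q, payoff X qI q ∂μ) + (∫ q, payoff X qJ q ∂μ)
      + (∫ q, payoff X qK q ∂μ) = ∑ t : Fin 4, X t := by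
  have hpm : IsProbabilityMeasure μ := hμ.1
  have h1 := integrable_payoff X 1 norm_one μ hμ
  have hI := integrable_payoff X qI norm_qI μ hμ
  have hJ := integrable_payoff X qJ norm_qJ μ hμ
  have hK := integrable_payoff X qK norm_qK μ hμ
  have hsum : ∫ q, (payoff X 1 q + payoff X qI q + payoff X qJ q + payoff X qK q) ∂μ
      = (∫ q, payoff X 1 q ∂μ) + (∫ q, payoff X qI q ∂μ) + (∫ q, payoff X qJ q ∂μ)
        + (∫ q, payoff X qK q ∂μ) := by
    have i12 : Integrable (fun q => payoff X 1 q + payoff X qI q) μ := h1.add hI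
    have i123 : Integrable (fun q => payoff X 1 q + payoff X qI q + payoff X qJ q) μ :=
      i12.add hJ
    have e1 : ∫ q, (payoff X 1 q + payoff X qI q) ∂μ
        = (∫ q, payoff X 1 q ∂μ) + (∫ q, payoff X qI q ∂μ) := integral_add h1 hI
    have e2 : ∫ q, (payoff X 1 q + payoff X qI q + payoff X qJ q) ∂μ
        = (∫ q, payoff X 1 q ∂μ) + (∫ q, payoff X qI q ∂μ) + (∫ q, payoff X qJ q ∂μ) :=
      (integral_add i12 hJ).trans (by rw [e1])
    exact (integral_add i123 hK).trans (by rw [e2])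
  rw [← hsum]
  have : ∫ q, (payoff X 1 q + payoff X qI q + payoff X qJ q + payoff X qK q) ∂μ
      = ∫ _q, (∑ t : Fin 4, X t) ∂μ := by
    refine integral_congr_ae ?_
    filter_upwards [ae_unit μ hμ] with q hq
    have hs : q.re ^ 2 + q.imI ^ 2 + q.imJ ^ 2 + q.imK ^ 2 = 1 := by
      rw [← Quaternion.normSq_def', Quaternion.normSq_eq_norm_mul_self, hq, mul_one]
    rw [key_sum, hs, mul_one]
  rw [this, integral_const, probReal_univ, one_smul]

end NashAux

/-- `q` is an optimal response for Player Two to the mixed strategy `ν`. -/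

def Optimal₂ (Y : Fin 4 → ℝ) (ν : Measure ℍ) (q : ℍ) : Prop :=
  ‖q‖ = 1 ∧ ∀ q' : ℍ, ‖q'‖ = 1 → ∫ p, payoff Y p q' ∂ν ≤ ∫ p, payoff Y p q ∂ν
/-- In every mixed-strategy quantum Nash equilibrium, Player One earns at
least the average `(X₁ + X₂ + X₃ + X₄)/4` of the four possible payoffs. -/
theorem nash_payoff_ge_average (X Y : Fin 4 → ℝ) (ν μ : Measure ℍ)
    (hnash : IsNash X Y ν μ) :
    (∑ t : Fin 4, X t) / 4 ≤ payoffM X ν μ := by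
  obtain ⟨hν, hμ, hopt, -⟩ := hnash
  set ν' : Measure ℍ := (4 : ENNReal)⁻¹ • (Measure.dirac (1 : ℍ) + Measure.dirac qI
    + Measure.dirac qJ + Measure.dirac qK) with hν'def
  have hSmeas : MeasurableSet {p : ℍ | ‖p‖ = 1} :=
    (isClosed_eq continuous_norm continuous_const).measurableSet
  have hmem : ∀ a : ℍ, ‖a‖ = 1 → Measure.dirac a {p : ℍ | ‖p‖ = 1} = 1 := by
    intro a ha
    exact Measure.dirac_apply_of_mem ha
  have hmix : IsMixed ν' := by
    constructor
    · constructor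
      simp only [hν'def, Measure.smul_apply, Measure.add_apply, measure_univ, smul_eq_mul]
      rw [show (1:ENNReal)+1+1+1 = 4 by norm_num]
      exact ENNReal.inv_mul_cancel (by norm_num) (by norm_num)
    · simp only [hν'def, Measure.smul_apply, Measure.add_apply, smul_eq_mul,
        hmem 1 norm_one, hmem qI norm_qI, hmem qJ norm_qJ, hmem qK norm_qK]
      rw [show (1:ENNReal)+1+1+1 = 4 by norm_num]
      exact ENNReal.inv_mul_cancel (by norm_num) (by norm_num)
  have hcalc : payoffM X ν' μ = (∑ t : Fin 4, X t) / 4 := by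
    set f : ℍ → ℝ := fun p => ∫ q, payoff X p q ∂μ with hf
    have h1 : Integrable f (Measure.dirac (1 : ℍ)) := integrable_dirac' f 1
    have hI : Integrable f (Measure.dirac qI) := integrable_dirac' f qI
    have hJ : Integrable f (Measure.dirac qJ) := integrable_dirac' f qJ
    have hK : Integrable f (Measure.dirac qK) := integrable_dirac' f qK
    have : payoffM X ν' μ = ((4 : ENNReal)⁻¹).toReal • (f 1 + f qI + f qJ + f qK) := by
      rw [payoffM, hν'def, integral_smul_measure,
        integral_add_measure ((h1.add_measure hI).add_measure hJ) hK,
        integral_add_measure (h1.add_measure hI) hJ, integral_add_measure h1 hI,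
        integral_dirac, integral_dirac, integral_dirac, integral_dirac]
    rw [this, hf]
    have h4 := four_integral X μ hμ
    simp only at h4 ⊢
    rw [h4]
    norm_num [ENNReal.toReal_inv]
    ring
  calc (∑ t : Fin 4, X t) / 4 = payoffM X ν' μ := hcalc.symm
    _ ≤ payoffM X ν μ := hopt ν' hmix
end
end

section
/- Let G be any two-by-two game and let p, q be unit quaternions. If the pair of Dirac measures (δ_p, δ_q) is a mixed-strategy Nash equilibrium of G^Q, then P₁^Q(p,q) = max{X₁, X₂, X₃, X₄} and P₂^Q(p,q) = max{Y₁, Y₂, Y₃, Y₄}; that is, a pure-strategy equilibrium can occur only if the resulting outcome is simultaneously optimal for both players. -/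
noncomputable section

open MeasureTheory

local notation "ℍ" => Quaternion ℝ

lemma sum_piQ_sq (r : ℍ) : ∑ t : Fin 4, (piQ t r) ^ 2 = ‖r‖ ^ 2 := by
  rw [Fin.sum_univ_four, sq ‖r‖, ← Quaternion.normSq_eq_norm_mul_self]
  simp [piQ, Quaternion.normSq_def']

lemma payoff_le_max (X : Fin 4 → ℝ) (p q : ℍ) (h : ‖p * q‖ = 1) :
    payoff X p q ≤ max (max (X 0) (X 1)) (max (X 2) (X 3)) := by
  set M := max (max (X 0) (X 1)) (max (X 2) (X 3)) with hM
  have hXle : ∀ t : Fin 4, X t ≤ M := by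
    intro t
    fin_cases t
    · exact le_trans (le_max_left _ _) (le_max_left _ _)
    · exact le_trans (le_max_right _ _) (le_max_left _ _)
    · exact le_trans (le_max_left _ _) (le_max_right _ _)
    · exact le_trans (le_max_right _ _) (le_max_right _ _)
  calc payoff X p q ≤ ∑ t : Fin 4, (piQ t (p * q)) ^ 2 * M := by
        apply Finset.sum_le_sum
        intro t _
        exact mul_le_mul_of_nonneg_left (hXle t) (sq_nonneg _)
    _ = (∑ t : Fin 4, (piQ t (p * q)) ^ 2) * M := by rw [← Finset.sum_mul]
    _ = M := by rw [sum_piQ_sq, h]; ring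

def eQ : Fin 4 → ℍ := ![1, qI, qJ, qK]

lemma piQ_eQ (s t : Fin 4) : piQ s (eQ t) = if s = t then 1 else 0 := by
  fin_cases s <;> fin_cases t <;>
    simp [piQ, eQ, qI, qJ, qK, Quaternion.re_one, Quaternion.imI_one, Quaternion.imJ_one,
      Quaternion.imK_one]

lemma norm_eQ (t : Fin 4) : ‖eQ t‖ = 1 := by
  have h : ‖eQ t‖ ^ 2 = 1 := by
    rw [sq, ← Quaternion.normSq_eq_norm_mul_self]
    fin_cases t <;> simp [eQ, qI, qJ, qK, Quaternion.normSq_def', Quaternion.re_one,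
      Quaternion.imI_one, Quaternion.imJ_one, Quaternion.imK_one] <;>
      exact (Quaternion.normSq_def' _).trans (by norm_num)
  calc ‖eQ t‖ = Real.sqrt (‖eQ t‖ ^ 2) := (Real.sqrt_sq (norm_nonneg _)).symm
    _ = 1 := by rw [h, Real.sqrt_one]

lemma payoff_eQ (X : Fin 4 → ℝ) (r : ℍ) (t : Fin 4) (hr : r = eQ t) (p q : ℍ)
    (hpq : p * q = r) : payoff X p q = X t := by
  unfold payoff
  rw [hpq, hr]
  simp [piQ_eQ, sq, ite_mul, mul_ite]

lemma isMixed_dirac {r : ℍ} (hr : ‖r‖ = 1) : IsMixed (Measure.dirac r) := by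
  refine ⟨inferInstance, ?_⟩
  have hms : MeasurableSet {p : ℍ | ‖p‖ = 1} :=
    (isClosed_eq continuous_norm continuous_const).measurableSet
  rw [Measure.dirac_apply' _ hms]
  simp [Set.indicator, hr]

/-- A pure-strategy Nash equilibrium of `G^Q` can occur only if the
resulting outcome is simultaneously optimal for both players. -/
theorem pure_nash_is_jointly_optimal (X Y : Fin 4 → ℝ) (p q : ℍ)
    (hp : ‖p‖ = 1) (hq : ‖q‖ = 1)
    (hnash : IsNash X Y (Measure.dirac p) (Measure.dirac q)) :
    payoff X p q = max (max (X 0) (X 1)) (max (X 2) (X 3)) ∧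
      payoff Y p q = max (max (Y 0) (Y 1)) (max (Y 2) (Y 3)) := by
  obtain ⟨-, -, h1, h2⟩ := hnash
  have hq0 : q ≠ 0 := by
    intro h; rw [h, norm_zero] at hq; norm_num at hq
  have hp0 : p ≠ 0 := by
    intro h; rw [h, norm_zero] at hp; norm_num at hp
  have hpq : ‖p * q‖ = 1 := by rw [norm_mul, hp, hq, one_mul]
  have key1 : ∀ t : Fin 4, X t ≤ payoff X p q := by
    intro t
    have hnorm : ‖eQ t * q⁻¹‖ = 1 := by
      rw [norm_mul, norm_eQ, norm_inv, hq]; norm_num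
    have h := h1 (Measure.dirac (eQ t * q⁻¹)) (isMixed_dirac hnorm)
    have hmul : (eQ t * q⁻¹) * q = eQ t := by
      rw [mul_assoc, inv_mul_cancel₀ hq0, mul_one]
    simpa [payoffM, integral_dirac, payoff_eQ X (eQ t) t rfl _ q hmul] using h
  have key2 : ∀ t : Fin 4, Y t ≤ payoff Y p q := by
    intro t
    have hnorm : ‖p⁻¹ * eQ t‖ = 1 := by
      rw [norm_mul, norm_eQ, norm_inv, hp]; norm_num
    have h := h2 (Measure.dirac (p⁻¹ * eQ t)) (isMixed_dirac hnorm)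
    have hmul : p * (p⁻¹ * eQ t) = eQ t := by
      rw [← mul_assoc, mul_inv_cancel₀ hp0, one_mul]
    simpa [payoffM, integral_dirac, payoff_eQ Y (eQ t) t rfl p _ hmul] using h
  constructor
  · exact le_antisymm (payoff_le_max X p q hpq)
      (max_le (max_le (key1 0) (key1 1)) (max_le (key1 2) (key1 3)))
  · exact le_antisymm (payoff_le_max Y p q hpq)
      (max_le (max_le (key2 0) (key2 1)) (max_le (key2 2) (key2 3)))
end
end

section
/- Let p, q, r, s be quaternions all of whose components π_t(p), π_t(q), π_t(r), π_t(s) (t = 1,2,3,4) are nonzero. Then the quadruple (p,q,r,s) is intertwined if and only if there is a permutation σ of {1,2,3,4} such that π_t(p)/π_t(q) = π_{σ(t)}(r)/π_{σ(t)}(s) for all t = 1,2,3,4; that is, the four quotients π₁(p)/π₁(q), π₂(p)/π₂(q), π₃(p)/π₃(q), π₄(p)/π₄(q) are equal, in some order, to the four quotients π₁(r)/π₁(s), π₂(r)/π₂(s), π₃(r)/π₃(s), π₄(r)/π₄(s). -/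
noncomputable section

open MeasureTheory

local notation "ℍ" => Quaternion ℝ

section aux
open Polynomial

theorem exists_perm_of_multiset_map_eq {α : Type*} [LinearOrder α] {n : ℕ} (f g : Fin n → α)
    (h : Multiset.map f Finset.univ.val = Multiset.map g Finset.univ.val) :
    ∃ σ : Equiv.Perm (Fin n), ∀ t, f (σ t) = g t := by
  have hl : (List.ofFn (f ∘ Tuple.sort f)).Perm (List.ofFn (g ∘ Tuple.sort g)) := by
    have h1 := Equiv.Perm.ofFn_comp_perm (Tuple.sort f) f
    have h2 := Equiv.Perm.ofFn_comp_perm (Tuple.sort g) g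
    have hfg : (List.ofFn f).Perm (List.ofFn g) := by
      rw [← Multiset.coe_eq_coe, List.ofFn_eq_map, List.ofFn_eq_map,
        ← Multiset.map_coe, ← Multiset.map_coe]
      exact h
    exact h1.trans (hfg.trans h2.symm)
  have heq : f ∘ Tuple.sort f = g ∘ Tuple.sort g := by
    apply List.ofFn_injective
    exact hl.eq_of_sortedLE (Tuple.monotone_sort f).sortedLE_ofFn
      (Tuple.monotone_sort g).sortedLE_ofFn
  exact ⟨(Tuple.sort g).symm.trans (Tuple.sort f), fun t => by
    have := congrFun heq ((Tuple.sort g).symm t)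
    simpa using this⟩

theorem roots_one_lin (a b : ℝ) (ha : a ≠ 0) :
    (C a * X + C b).roots = {-(b / a)} := by
  have h : C a * X + C b = C a * (X - C (-(b/a))) := by
    rw [mul_sub, ← C_mul, mul_neg, mul_div_cancel₀ _ ha, C_neg, sub_neg_eq_add]
  rw [h, roots_C_mul _ ha, roots_X_sub_C]

theorem lin_ne_zero (a b : ℝ) (ha : a ≠ 0) : (C a * X + C b) ≠ 0 := by
  intro h
  have := congrArg (fun p => coeff p 1) h
  simp at this
  exact ha this

theorem roots_lin {n : ℕ} (a b : Fin n → ℝ) (ha : ∀ t, a t ≠ 0) :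
    (∏ t : Fin n, (C (a t) * X + C (b t))).roots
      = Multiset.map (fun t => -(b t / a t)) Finset.univ.val := by
  rw [roots_prod _ _ (Finset.prod_ne_zero_iff.2 fun t _ => lin_ne_zero _ _ (ha t))]
  have : ∀ i : Fin n, (C (a i) * X + C (b i)).roots = ({-(b i / a i)} : Multiset ℝ) :=
    fun i => roots_one_lin _ _ (ha i)
  simp_rw [this]
  rw [Multiset.bind_singleton]

theorem K_smul_add (X Y : ℝ) (p q : ℍ) :
    K (X • p + Y • q) = ∏ t : Fin 4, (X * piQ t p + Y * piQ t q) := by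
  simp [K, piQ, Fin.prod_univ_four, Quaternion.re_smul]

end aux

/-- For quaternions with all components nonzero, `(p,q,r,s)` is intertwined
iff the four quotients `π_t(p)/π_t(q)` equal, in some order, the quotients `π_t(r)/π_t(s)`. -/
theorem intertwined_iff_quotients (p q r s : ℍ)
    (hp : ∀ t : Fin 4, piQ t p ≠ 0) (hq : ∀ t : Fin 4, piQ t q ≠ 0)
    (hr : ∀ t : Fin 4, piQ t r ≠ 0) (hs : ∀ t : Fin 4, piQ t s ≠ 0) :
    Intertwined p q r s ↔
      ∃ σ : Equiv.Perm (Fin 4), ∀ t : Fin 4,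
        piQ t p / piQ t q = piQ (σ t) r / piQ (σ t) s := by
  set a := fun t => piQ t p with haa
  set b := fun t => piQ t q with hbb
  set c := fun t => piQ t r with hcc
  set d := fun t => piQ t s with hdd
  constructor
  · rintro ⟨α, hα, hK⟩
    simp only [K_smul_add] at hK
    -- polynomial identity
    have hpoly : (α • ∏ t : Fin 4, (Polynomial.C (a t) * Polynomial.X + Polynomial.C (b t)))
        = ∏ t : Fin 4, (Polynomial.C (c t) * Polynomial.X + Polynomial.C (d t)) := by
      apply Polynomial.funext
      intro x
      have := hK x 1
      simp only [Polynomial.eval_smul, Polynomial.eval_prod, Polynomial.eval_add,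
        Polynomial.eval_mul, Polynomial.eval_C, Polynomial.eval_X, smul_eq_mul]
      calc α * ∏ t : Fin 4, (a t * x + b t) = α * ∏ t : Fin 4, (x * a t + 1 * b t) := by
            congr 1; exact Finset.prod_congr rfl fun t _ => by ring
        _ = ∏ t : Fin 4, (x * c t + 1 * d t) := this
        _ = ∏ t : Fin 4, (c t * x + d t) := Finset.prod_congr rfl fun t _ => by ring
    have hroots : Multiset.map (fun t => -(b t / a t)) Finset.univ.val
        = Multiset.map (fun t => -(d t / c t)) Finset.univ.val := by
      rw [← roots_lin a b hp, ← roots_lin c d hr, ← hpoly,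
        Polynomial.roots_smul_nonzero _ hα]
    obtain ⟨σ, hσ⟩ := exists_perm_of_multiset_map_eq _ _ hroots
    refine ⟨σ.symm, fun t => ?_⟩
    have := hσ (σ.symm t)
    simp only [Equiv.apply_symm_apply, neg_inj] at this
    rw [← inv_div (b t) (a t), this, inv_div]
  · rintro ⟨σ, hσ⟩
    refine ⟨(∏ t : Fin 4, d t) / (∏ t : Fin 4, b t),
      div_ne_zero (Finset.prod_ne_zero_iff.2 fun t _ => hs t)
        (Finset.prod_ne_zero_iff.2 fun t _ => hq t), fun X Y => ?_⟩
    simp only [K_smul_add]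
    have key : ∀ t, d (σ t) * (X * a t + Y * b t) = b t * (X * c (σ t) + Y * d (σ t)) := by
      intro t
      have h := (div_eq_div_iff (hq t) (hs (σ t))).1 (hσ t)
      linear_combination X * h
    have hprod : (∏ t : Fin 4, d (σ t)) * ∏ t : Fin 4, (X * a t + Y * b t)
        = (∏ t : Fin 4, b t) * ∏ t : Fin 4, (X * c (σ t) + Y * d (σ t)) := by
      rw [← Finset.prod_mul_distrib, ← Finset.prod_mul_distrib]
      exact Finset.prod_congr rfl fun t _ => key t
    rw [Equiv.prod_comp σ d, Equiv.prod_comp σ (fun t => X * c t + Y * d t)] at hprod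
    have hb : (∏ t : Fin 4, b t) ≠ 0 := Finset.prod_ne_zero_iff.2 fun t _ => hq t
    field_simp
    linarith [hprod]
end
end
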